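/- Let A be an N×N Hermitian positive definite complex matrix and B_1, …, B_n be N×N Hermitian positive semidefinite complex matrices, and for x ∈ ℝⁿ with x_i ≥ 0 for all i let Σ(x) = (A + Σ_{i=1}^n x_i B_i)⁻¹. Then the E-optimal metric f_E(x) = λ_max(Σ(x)), the largest eigenvalue of the Hermitian matrix Σ(x), which equals sup over unit vectors u ∈ ℂᴺ of u^H Σ(x) u, is convex on the nonnegative orthant {x ∈ ℝⁿ | x_i ≥ 0 for all i}. -/

import Mathlib

open Matrix ComplexOrder

section aux
variable {N : ℕ}

lemma smul_posSemidef {c : ℝ} (hc : 0 ≤ c) {M : Matrix (Fin N) (Fin N) ℂ}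
    (hM : M.PosSemidef) : (c • M).PosSemidef := by
  rw [posSemidef_iff_dotProduct_mulVec]
  constructor
  · show _ = _
    rw [conjTranspose_smul, star_trivial, hM.1.eq]
  · intro x
    rw [Matrix.smul_mulVec, dotProduct_smul]
    exact smul_nonneg hc (hM.dotProduct_mulVec_nonneg x)

/-- For a PD matrix `P`, `uᴴ P⁻¹ u ≥ 2 Re(wᴴ u) - wᴴ P w` for any `w`. -/
lemma rayleigh_lb {P : Matrix (Fin N) (Fin N) ℂ} (hP : P.PosDef) (u w : Fin N → ℂ) :
    2 * (star w ⬝ᵥ u).re - (star w ⬝ᵥ P *ᵥ w).re ≤ (star u ⬝ᵥ P⁻¹ *ᵥ u).re := by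
  set c := P⁻¹ *ᵥ u with hc
  have hPc : P *ᵥ c = u := by
    rw [hc, Matrix.mulVec_mulVec, Matrix.mul_nonsing_inv _
      ((Matrix.isUnit_iff_isUnit_det P).mp hP.isUnit), Matrix.one_mulVec]
  have hcw : star c ⬝ᵥ P *ᵥ w = star u ⬝ᵥ w := by
    rw [Matrix.dotProduct_mulVec]
    congr 1
    calc star c ᵥ* P = star c ᵥ* Pᴴᴴ := by rw [conjTranspose_conjTranspose]
    _ = star (Pᴴ *ᵥ c) := (star_mulVec _ _).symm
    _ = star u := by rw [hP.isHermitian.eq, hPc]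
  have h0 := hP.posSemidef.re_dotProduct_nonneg (w - c)
  have expand : star (w - c) ⬝ᵥ P *ᵥ (w - c)
      = star w ⬝ᵥ P *ᵥ w - star w ⬝ᵥ u - star u ⬝ᵥ w + star c ⬝ᵥ u := by
    rw [star_sub, sub_dotProduct, Matrix.mulVec_sub, dotProduct_sub, dotProduct_sub,
      hPc, hcw]
    ring
  have hre1 : (star u ⬝ᵥ w).re = (star w ⬝ᵥ u).re := by
    rw [star_dotProduct]; simp
  have hre2 : (star c ⬝ᵥ u).re = (star u ⬝ᵥ c).re := by
    rw [star_dotProduct]; simp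
  rw [expand] at h0
  simp only [Complex.add_re, Complex.sub_re, RCLike.re_to_complex] at h0 ⊢
  rw [hre1, hre2] at h0
  linarith

/-- Key convexity inequality for the Rayleigh quotient of the inverse. -/
lemma key {M₁ M₂ : Matrix (Fin N) (Fin N) ℂ} (h1 : M₁.PosDef) (h2 : M₂.PosDef)
    {a b : ℝ} (ha : 0 ≤ a) (hb : 0 ≤ b) (hab : a + b = 1)
    (hM : (a • M₁ + b • M₂).PosDef) (u : Fin N → ℂ) :
    (star u ⬝ᵥ (a • M₁ + b • M₂)⁻¹ *ᵥ u).re ≤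
      a * (star u ⬝ᵥ M₁⁻¹ *ᵥ u).re + b * (star u ⬝ᵥ M₂⁻¹ *ᵥ u).re := by
  set M := a • M₁ + b • M₂ with hMdef
  set w := M⁻¹ *ᵥ u with hw
  have hMw : M *ᵥ w = u := by
    rw [hw, Matrix.mulVec_mulVec, Matrix.mul_nonsing_inv _
      ((Matrix.isUnit_iff_isUnit_det M).mp hM.isUnit), Matrix.one_mulVec]
  have hsplit : (star w ⬝ᵥ u).re
      = a * (star w ⬝ᵥ M₁ *ᵥ w).re + b * (star w ⬝ᵥ M₂ *ᵥ w).re := by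
    rw [← hMw, hMdef, Matrix.add_mulVec, Matrix.smul_mulVec,
      Matrix.smul_mulVec, dotProduct_add, dotProduct_smul, dotProduct_smul]
    simp [Complex.real_smul]
  have hgoal : (star u ⬝ᵥ M⁻¹ *ᵥ u).re = (star w ⬝ᵥ u).re := by
    rw [← hw, star_dotProduct]; simp
  have k1 := rayleigh_lb h1 u w
  have k2 := rayleigh_lb h2 u w
  have k1' := mul_le_mul_of_nonneg_left k1 ha
  have k2' := mul_le_mul_of_nonneg_left k2 hb
  have hcomb : a * (2 * (star w ⬝ᵥ u).re - (star w ⬝ᵥ M₁ *ᵥ w).re)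
      + b * (2 * (star w ⬝ᵥ u).re - (star w ⬝ᵥ M₂ *ᵥ w).re) = (star w ⬝ᵥ u).re := by
    linear_combination (2 * (star w ⬝ᵥ u).re) * hab + hsplit
  rw [hgoal, ← hcomb]
  exact add_le_add k1' k2'
end aux

lemma bdd (C : Matrix (Fin N) (Fin N) ℂ) :
    BddAbove (Set.range fun u : {u : Fin N → ℂ // ∑ j, Complex.normSq (u j) = 1} =>
      (star (u : Fin N → ℂ) ⬝ᵥ C *ᵥ (u : Fin N → ℂ)).re) := by
  refine ⟨∑ i, ∑ j, ‖C i j‖, ?_⟩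
  rintro r ⟨⟨u, hu⟩, rfl⟩
  have hub : ∀ j, ‖u j‖ ≤ 1 := by
    intro j
    have h1 : Complex.normSq (u j) ≤ 1 := hu ▸ Finset.single_le_sum
      (fun k _ => Complex.normSq_nonneg (u k)) (Finset.mem_univ j)
    have h2 : Complex.normSq (u j) = ‖u j‖ ^ 2 := by
      rw [Complex.normSq_eq_norm_sq]
    nlinarith [norm_nonneg (u j)]
  have hrow : ∀ i, ‖(C *ᵥ u) i‖ ≤ ∑ j, ‖C i j‖ := by
    intro i
    calc ‖(C *ᵥ u) i‖ = ‖∑ j, C i j * u j‖ := by rw [Matrix.mulVec, dotProduct]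
    _ ≤ ∑ j, ‖C i j * u j‖ := norm_sum_le _ _
    _ ≤ ∑ j, ‖C i j‖ := by
        refine Finset.sum_le_sum fun j _ => ?_
        rw [norm_mul]
        exact mul_le_of_le_one_right (norm_nonneg _) (hub j)
  calc (star u ⬝ᵥ C *ᵥ u).re ≤ ‖star u ⬝ᵥ C *ᵥ u‖ := Complex.re_le_norm _
  _ = ‖∑ i, star u i * (C *ᵥ u) i‖ := by rw [dotProduct]
  _ ≤ ∑ i, ‖star u i * (C *ᵥ u) i‖ := norm_sum_le _ _
  _ ≤ ∑ i, ∑ j, ‖C i j‖ := by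
      refine Finset.sum_le_sum fun i _ => ?_
      rw [norm_mul, Pi.star_apply, norm_star]
      calc ‖u i‖ * ‖(C *ᵥ u) i‖ ≤ 1 * ∑ j, ‖C i j‖ :=
            mul_le_mul (hub i) (hrow i) (norm_nonneg _) zero_le_one
      _ = ∑ j, ‖C i j‖ := one_mul _


open Matrix ComplexOrder in
/-- The E-optimal metric `x ↦ λ_max((A + ∑ i, x i • B i)⁻¹)`, expressed as the
supremum of the Rayleigh quotient `uᴴ Σ(x) u` over unit vectors `u`, is convex
on the nonnegative orthant. -/
theorem lambdaMax_convex (N n : ℕ)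
    (A : Matrix (Fin N) (Fin N) ℂ) (hA : A.PosDef)
    (B : Fin n → Matrix (Fin N) (Fin N) ℂ) (hB : ∀ i, (B i).PosSemidef) :
    ConvexOn ℝ {x : Fin n → ℝ | ∀ i, 0 ≤ x i}
      (fun x : Fin n → ℝ =>
        ⨆ u : {u : Fin N → ℂ // ∑ j, Complex.normSq (u j) = 1},
          (star (u : Fin N → ℂ) ⬝ᵥ
            ((A + ∑ i, x i • B i)⁻¹).mulVec (u : Fin N → ℂ)).re) := by
  have hS : Convex ℝ {x : Fin n → ℝ | ∀ i, 0 ≤ x i} := by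
    intro x hx y hy a b ha hb hab i
    simp only [Pi.add_apply, Pi.smul_apply, smul_eq_mul]
    exact add_nonneg (mul_nonneg ha (hx i)) (mul_nonneg hb (hy i))
  have hPD : ∀ x : Fin n → ℝ, (∀ i, 0 ≤ x i) → (A + ∑ i, x i • B i).PosDef := by
    intro x hx
    refine hA.add_posSemidef ?_
    exact Finset.sum_induction _ _ (fun p q hp hq => hp.add hq) Matrix.PosSemidef.zero
      (fun i _ => smul_posSemidef (hx i) (hB i))
  rcases Nat.eq_zero_or_pos N with hN | hN
  · subst hN
    haveI : IsEmpty {u : Fin 0 → ℂ // ∑ j, Complex.normSq (u j) = 1} :=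
      ⟨fun ⟨u, hu⟩ => by simp at hu⟩
    have hconst : (fun x : Fin n → ℝ =>
        ⨆ u : {u : Fin 0 → ℂ // ∑ j, Complex.normSq (u j) = 1},
          (star (u : Fin 0 → ℂ) ⬝ᵥ
            ((A + ∑ i, x i • B i)⁻¹).mulVec (u : Fin 0 → ℂ)).re) = fun _ => (0 : ℝ) :=
      funext fun x => Real.iSup_of_isEmpty _
    rw [hconst]
    exact convexOn_const _ hS
  · haveI : Nonempty {u : Fin N → ℂ // ∑ j, Complex.normSq (u j) = 1} := by
      refine ⟨⟨Pi.single ⟨0, hN⟩ 1, ?_⟩⟩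
      rw [Finset.sum_eq_single ⟨0, hN⟩ (fun k _ hk => by simp [Pi.single_apply, hk])
        (fun h => absurd (Finset.mem_univ _) h)]
      simp
    refine ⟨hS, fun x hx y hy a b ha hb hab => ?_⟩
    have hMeq : A + ∑ i, (a • x + b • y) i • B i
        = a • (A + ∑ i, x i • B i) + b • (A + ∑ i, y i • B i) := by
      have h1 : ∀ i : Fin n, (a • x + b • y) i • B i
          = a • (x i • B i) + b • (y i • B i) := fun i => by
        rw [Pi.add_apply, Pi.smul_apply, Pi.smul_apply, smul_eq_mul, smul_eq_mul,
          add_smul, mul_smul, mul_smul]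
      rw [Finset.sum_congr rfl fun i _ => h1 i, Finset.sum_add_distrib,
        ← Finset.smul_sum, ← Finset.smul_sum, smul_add, smul_add, add_add_add_comm,
        ← add_smul, hab, one_smul]
    simp only [smul_eq_mul, hMeq]
    refine ciSup_le fun u => ?_
    have hkey := key (hPD x hx) (hPD y hy) ha hb hab
      (hMeq ▸ hPD _ (hS hx hy ha hb hab)) (u : Fin N → ℂ)
    refine hkey.trans ?_
    exact add_le_add
      (mul_le_mul_of_nonneg_left (le_ciSup (bdd _) u) ha)
      (mul_le_mul_of_nonneg_left (le_ciSup (bdd _) u) hb)
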